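/- Fix p ∈ (0,1). For any Boolean function f : {-1,1}^n → {-1,1}, ‖f - E f‖_1 = Var(f) ≤ 2 max{p, 1-p} √π · E|∇f|. -/

import Mathlib

open Finset Real
open scoped Classical

noncomputable def wt (p : ℝ) (n : ℕ) (x : Fin n → Bool) : ℝ :=
  ∏ i, if x i then p else 1 - p

noncomputable def ex (p : ℝ) (n : ℕ) (f : (Fin n → Bool) → ℝ) : ℝ :=
  ∑ x : Fin n → Bool, wt p n x * f x

noncomputable def var (p : ℝ) (n : ℕ) (f : (Fin n → Bool) → ℝ) : ℝ :=
  ex p n (fun x => f x ^ 2) - (ex p n f) ^ 2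

def flipC {n : ℕ} (j : Fin n) (x : Fin n → Bool) : Fin n → Bool :=
  Function.update x j (!(x j))

noncomputable def Dj {n : ℕ} (j : Fin n) (f : (Fin n → Bool) → ℝ) (x : Fin n → Bool) : ℝ :=
  (f x - f (flipC j x)) / 2

noncomputable def gradNorm {n : ℕ} (f : (Fin n → Bool) → ℝ) (x : Fin n → Bool) : ℝ :=
  Real.sqrt (∑ j, (Dj j f x) ^ 2)

noncomputable def condExpJ (p : ℝ) {n : ℕ} (j : Fin n) (f : (Fin n → Bool) → ℝ)
    (x : Fin n → Bool) : ℝ :=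
  p * f (Function.update x j true) + (1 - p) * f (Function.update x j false)

noncomputable def infl (p : ℝ) (n : ℕ) (j : Fin n) (f : (Fin n → Bool) → ℝ) : ℝ :=
  ex p n (fun x => |f x - condExpJ p j f x|)

noncomputable def heatPt (p t : ℝ) (n : ℕ) (f : (Fin n → Bool) → ℝ)
    (x : Fin n → Bool) : ℝ :=
  ∑ y : Fin n → Bool,
    (∏ j, ((if y j = x j then Real.exp (-t) else 0)
      + (1 - Real.exp (-t)) * (if y j then p else 1 - p))) * f y

noncomputable def lpNorm (p : ℝ) (n : ℕ) (r : ℝ) (f : (Fin n → Bool) → ℝ) : ℝ :=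
  (ex p n (fun x => |f x| ^ r)) ^ (1 / r)

noncomputable def sens {n : ℕ} (f : (Fin n → Bool) → ℝ) (x : Fin n → Bool) : ℝ :=
  ((Finset.univ.filter (fun j : Fin n => f x ≠ f (flipC j x))).card : ℝ)

noncomputable def hEdge {n : ℕ} (f : (Fin n → Bool) → ℝ) (x : Fin n → Bool) : ℝ :=
  if f x = 1 then ((Finset.univ.filter (fun j : Fin n => f (flipC j x) ≠ 1)).card : ℝ) else 0


/-! ### Auxiliary lemmas -/

noncomputable def ccB (p : ℝ) : ℝ := (max p (1 - p) * Real.sqrt Real.pi)⁻¹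

section aux

variable {p : ℝ}

lemma wt_nonneg (hp : p ∈ Set.Ioo (0:ℝ) 1) (n : ℕ) (x : Fin n → Bool) : 0 ≤ wt p n x := by
  obtain ⟨h0, h1⟩ := hp
  exact Finset.prod_nonneg fun i _ => by split <;> linarith

lemma sum_wt (p : ℝ) (n : ℕ) : ∑ x : Fin n → Bool, wt p n x = 1 := by
  unfold wt
  have h := Finset.prod_univ_sum (fun _ : Fin n => (Finset.univ : Finset Bool))
    (fun _ b => if b = true then p else 1 - p)
  rw [Fintype.piFinset_univ] at h
  rw [← h]
  have hb : (∑ b : Bool, if b = true then p else 1 - p) = 1 := by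
    rw [Fintype.sum_bool]; norm_num
  simp [hb]

lemma ex_congr {n : ℕ} {f g : (Fin n → Bool) → ℝ} (h : ∀ x, f x = g x) :
    ex p n f = ex p n g := by
  have : f = g := funext h
  rw [this]

lemma ex_affine (n : ℕ) (α β : ℝ) (f : (Fin n → Bool) → ℝ) :
    ex p n (fun x => α * f x + β) = α * ex p n f + β := by
  unfold ex
  calc ∑ x : Fin n → Bool, wt p n x * (α * f x + β)
      = ∑ x : Fin n → Bool, (α * (wt p n x * f x) + β * wt p n x) :=
        Finset.sum_congr rfl fun x _ => by ring
    _ = α * ∑ x : Fin n → Bool, wt p n x * f x + β * ∑ x : Fin n → Bool, wt p n x := by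
        rw [Finset.sum_add_distrib, ← Finset.mul_sum, ← Finset.mul_sum]
    _ = α * ∑ x : Fin n → Bool, wt p n x * f x + β := by rw [sum_wt]; ring

lemma ex_mono (hp : p ∈ Set.Ioo (0:ℝ) 1) {n : ℕ} {f g : (Fin n → Bool) → ℝ}
    (h : ∀ x, f x ≤ g x) : ex p n f ≤ ex p n g :=
  Finset.sum_le_sum fun x _ => mul_le_mul_of_nonneg_left (h x) (wt_nonneg hp n x)

lemma abs_ex_le (hp : p ∈ Set.Ioo (0:ℝ) 1) {n : ℕ} (f : (Fin n → Bool) → ℝ) :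
    |ex p n f| ≤ ex p n (fun x => |f x|) := by
  refine (Finset.abs_sum_le_sum_abs _ _).trans ?_
  refine Finset.sum_le_sum fun x _ => ?_
  rw [abs_mul, abs_of_nonneg (wt_nonneg hp n x)]

lemma ccB_pos (hp : p ∈ Set.Ioo (0:ℝ) 1) : 0 < ccB p := by
  obtain ⟨h0, h1⟩ := hp
  have hM : 0 < max p (1 - p) := lt_max_of_lt_left h0
  have hπ : 0 < Real.sqrt Real.pi := Real.sqrt_pos.mpr Real.pi_pos
  exact inv_pos.mpr (mul_pos hM hπ)

lemma ccB_sq (hp : p ∈ Set.Ioo (0:ℝ) 1) : ccB p ^ 2 * (p * (1 - p)) ≤ 1 / 3 := by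
  obtain ⟨h0, h1⟩ := hp
  have hM : 0 < max p (1 - p) := lt_max_of_lt_left h0
  have hπ : (0:ℝ) < Real.pi := Real.pi_pos
  have h3 : (3:ℝ) < Real.pi := Real.pi_gt_three
  have hsq : Real.sqrt Real.pi ^ 2 = Real.pi := Real.sq_sqrt hπ.le
  have hcc : ccB p ^ 2 = (max p (1 - p) ^ 2 * Real.pi)⁻¹ := by
    unfold ccB
    rw [inv_pow, mul_pow, hsq]
  have hpq : p * (1 - p) ≤ max p (1 - p) ^ 2 := by
    have h1' : p ≤ max p (1 - p) := le_max_left _ _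
    have h2' : 1 - p ≤ max p (1 - p) := le_max_right _ _
    nlinarith
  rw [hcc]
  rw [inv_mul_le_iff₀ (by positivity)]
  have : max p (1 - p) ^ 2 * Real.pi * (1/3) = max p (1-p)^2 * (Real.pi / 3) := by ring
  rw [this]
  calc p * (1 - p) ≤ max p (1 - p) ^ 2 * 1 := by linarith
    _ ≤ max p (1-p)^2 * (Real.pi / 3) := by
        apply mul_le_mul_of_nonneg_left _ (by positivity)
        linarith


lemma quadineq (S c pq d : ℝ) (hS0 : 0 ≤ S) (hc : 0 ≤ c) (hSle : S ≤ c / 4)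
    (hpq0 : 0 ≤ pq) (hpq4 : pq ≤ 1 / 4) (hcpq : c ^ 2 * pq ≤ 1 / 3) (hd : d ^ 2 ≤ 1) :
    (S + c * pq * d ^ 2) ^ 2 ≤ S ^ 2 + (d / 2) ^ 2 := by
  have h1 := mul_le_mul_of_nonneg_right hSle
    (show (0:ℝ) ≤ 2 * (c * pq * d ^ 2) by positivity)
  have h2 := mul_le_mul_of_nonneg_right hcpq
    (show (0:ℝ) ≤ pq * (d ^ 2 * d ^ 2) by positivity)
  have h3 := mul_le_mul_of_nonneg_right hpq4
    (show (0:ℝ) ≤ d ^ 2 * d ^ 2 by positivity)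
  have h4 := mul_le_mul_of_nonneg_right hd (sq_nonneg d)
  have h5 := mul_le_mul_of_nonneg_right hcpq (sq_nonneg d)
  nlinarith [h1, h2, h3, h4, h5]

/-- Two-point inequality for J(t) = c t (1-t). -/
lemma twopoint (hp : p ∈ Set.Ioo (0:ℝ) 1) {a b : ℝ}
    (ha0 : 0 ≤ a) (ha1 : a ≤ 1) (hb0 : 0 ≤ b) (hb1 : b ≤ 1) :
    ccB p * (p * a + (1 - p) * b) * (1 - (p * a + (1 - p) * b)) ≤
      Real.sqrt ((p * (ccB p * a * (1 - a)) + (1 - p) * (ccB p * b * (1 - b))) ^ 2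
        + ((a - b) / 2) ^ 2) := by
  obtain ⟨h0, h1⟩ := hp
  set c := ccB p with hc
  have hcpos : 0 < c := ccB_pos ⟨h0, h1⟩
  set q : ℝ := 1 - p with hq
  set m : ℝ := p * a + q * b with hm
  set S : ℝ := p * (c * a * (1 - a)) + q * (c * b * (1 - b)) with hS
  set d : ℝ := a - b with hd
  have hq0 : (0:ℝ) ≤ q := by rw [hq]; linarith
  have hm0 : 0 ≤ m := by
    rw [hm]
    exact add_nonneg (mul_nonneg h0.le ha0) (mul_nonneg hq0 hb0)
  have hm1 : m ≤ 1 := by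
    rw [hm]
    nlinarith [mul_le_mul_of_nonneg_left ha1 h0.le, mul_le_mul_of_nonneg_left hb1 hq0]
  have key : c * m * (1 - m) = S + c * (p * q) * d ^ 2 := by
    simp only [hm, hS, hd, hq]; ring
  have hJm : 0 ≤ c * m * (1 - m) :=
    mul_nonneg (mul_nonneg hcpos.le hm0) (by linarith)
  rw [← Real.sqrt_sq hJm]
  apply Real.sqrt_le_sqrt
  -- (S + c p q d²)² ≤ S² + (d/2)²
  have hJa : 0 ≤ c * a * (1 - a) := mul_nonneg (mul_nonneg hcpos.le ha0) (by linarith)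
  have hJb : 0 ≤ c * b * (1 - b) := mul_nonneg (mul_nonneg hcpos.le hb0) (by linarith)
  have hS0 : 0 ≤ S := by
    rw [hS]
    exact add_nonneg (mul_nonneg h0.le hJa) (mul_nonneg hq0 hJb)
  have hJa4 : c * a * (1 - a) ≤ c / 4 := by nlinarith [sq_nonneg (a - 1/2)]
  have hJb4 : c * b * (1 - b) ≤ c / 4 := by nlinarith [sq_nonneg (b - 1/2)]
  have hSle : S ≤ c / 4 := by
    rw [hS]
    nlinarith [mul_le_mul_of_nonneg_left hJa4 h0.le, mul_le_mul_of_nonneg_left hJb4 hq0]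
  have hd2 : d ^ 2 ≤ 1 := by rw [hd]; nlinarith
  have hpq : 0 ≤ p * q := mul_nonneg h0.le hq0
  have hpq4 : p * q ≤ 1 / 4 := by nlinarith [sq_nonneg (p - q)]
  have hc2 : c ^ 2 * (p * q) ≤ 1 / 3 := by
    rw [hq]
    exact ccB_sq ⟨h0, h1⟩
  rw [key]
  exact quadineq S c (p * q) d hS0 hcpos.le hSle hpq hpq4 hc2 hd2

/-- Triangle (Minkowski) inequality in ℝ^{n+2}. -/
lemma mink {ι : Type*} (s : Finset ι) (F G : ι → ℝ) :
    Real.sqrt (∑ i ∈ s, (F i + G i) ^ 2)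
      ≤ Real.sqrt (∑ i ∈ s, F i ^ 2) + Real.sqrt (∑ i ∈ s, G i ^ 2) := by
  have hF : (0:ℝ) ≤ ∑ i ∈ s, F i ^ 2 := Finset.sum_nonneg fun i _ => sq_nonneg _
  have hG : (0:ℝ) ≤ ∑ i ∈ s, G i ^ 2 := Finset.sum_nonneg fun i _ => sq_nonneg _
  have hcs : (∑ i ∈ s, F i * G i) ≤ Real.sqrt (∑ i ∈ s, F i ^ 2) * Real.sqrt (∑ i ∈ s, G i ^ 2) := by
    have h1 : (∑ i ∈ s, F i * G i) ≤ |∑ i ∈ s, F i * G i| := le_abs_self _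
    have h2 : |∑ i ∈ s, F i * G i| = Real.sqrt ((∑ i ∈ s, F i * G i) ^ 2) :=
      (Real.sqrt_sq_eq_abs _).symm
    have h3 := Real.sqrt_le_sqrt (Finset.sum_mul_sq_le_sq_mul_sq s F G)
    rw [Real.sqrt_mul hF] at h3
    exact h1.trans (h2.le.trans h3)
  rw [← Real.sqrt_sq (add_nonneg (Real.sqrt_nonneg _) (Real.sqrt_nonneg _))]
  apply Real.sqrt_le_sqrt
  have hexp : (Real.sqrt (∑ i ∈ s, F i ^ 2) + Real.sqrt (∑ i ∈ s, G i ^ 2)) ^ 2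
      = (∑ i ∈ s, F i ^ 2) + 2 * (Real.sqrt (∑ i ∈ s, F i ^ 2) * Real.sqrt (∑ i ∈ s, G i ^ 2))
        + (∑ i ∈ s, G i ^ 2) := by
    rw [add_sq, Real.sq_sqrt hF, Real.sq_sqrt hG]
    ring
  rw [hexp]
  have hsum : (∑ i ∈ s, (F i + G i) ^ 2)
      = (∑ i ∈ s, F i ^ 2) + 2 * (∑ i ∈ s, F i * G i) + ∑ i ∈ s, G i ^ 2 := by
    rw [Finset.mul_sum, ← Finset.sum_add_distrib, ← Finset.sum_add_distrib]
    exact Finset.sum_congr rfl fun i _ => by ring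
  rw [hsum]
  linarith

lemma sqrt_smul_sum {ι : Type*} (s : Finset ι) (P : ℝ) (hP : 0 ≤ P) (F : ι → ℝ) :
    Real.sqrt (∑ i ∈ s, (P * F i) ^ 2) = P * Real.sqrt (∑ i ∈ s, F i ^ 2) := by
  have : (∑ i ∈ s, (P * F i) ^ 2) = P ^ 2 * ∑ i ∈ s, F i ^ 2 := by
    rw [Finset.mul_sum]
    exact Finset.sum_congr rfl fun i _ => by ring
  rw [this, Real.sqrt_mul (sq_nonneg P), Real.sqrt_sq hP]

lemma tri2 {n : ℕ} (a b : Fin n → ℝ) (A A' B B' P Q : ℝ) (hP : 0 ≤ P) (hQ : 0 ≤ Q) :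
    Real.sqrt ((P * A + Q * B) ^ 2 + ((P * A' + Q * B') ^ 2
        + ∑ i, (P * a i + Q * b i) ^ 2))
      ≤ P * Real.sqrt (A ^ 2 + (A' ^ 2 + ∑ i, a i ^ 2))
        + Q * Real.sqrt (B ^ 2 + (B' ^ 2 + ∑ i, b i ^ 2)) := by
  set F : Fin (n + 2) → ℝ := Fin.cons A (Fin.cons A' a) with hF
  set G : Fin (n + 2) → ℝ := Fin.cons B (Fin.cons B' b) with hG
  have hsF : ∀ (X X' : ℝ) (x : Fin n → ℝ),
      (∑ i : Fin (n + 2), (Fin.cons X (Fin.cons X' x) : Fin (n+2) → ℝ) i ^ 2)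
        = X ^ 2 + (X' ^ 2 + ∑ i, x i ^ 2) := by
    intro X X' x
    rw [Fin.sum_univ_succ, Fin.sum_univ_succ]
    simp [Fin.cons_succ]
  have key := mink Finset.univ (fun i => P * F i) (fun i => Q * G i)
  rw [sqrt_smul_sum Finset.univ P hP F, sqrt_smul_sum Finset.univ Q hQ G] at key
  have hfun : ∀ i : Fin (n + 2), P * F i + Q * G i
      = (Fin.cons (P * A + Q * B) (Fin.cons (P * A' + Q * B')
          (fun i => P * a i + Q * b i)) : Fin (n+2) → ℝ) i := by
    intro i
    refine Fin.cases ?_ (fun j => ?_) i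
    · simp [hF, hG]
    · refine Fin.cases ?_ (fun k => ?_) j <;> simp [hF, hG, Fin.cons_succ]
  have hFG : (∑ i : Fin (n + 2), (P * F i + Q * G i) ^ 2)
      = (P * A + Q * B) ^ 2 + ((P * A' + Q * B') ^ 2 + ∑ i, (P * a i + Q * b i) ^ 2) := by
    calc (∑ i : Fin (n + 2), (P * F i + Q * G i) ^ 2)
        = ∑ i : Fin (n + 2), (Fin.cons (P * A + Q * B) (Fin.cons (P * A' + Q * B')
            (fun i => P * a i + Q * b i)) : Fin (n+2) → ℝ) i ^ 2 :=
          Finset.sum_congr rfl fun i _ => by rw [hfun i]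
      _ = _ := hsF _ _ _
  rw [hFG, hsF A A' a, hsF B B' b] at key
  exact key

lemma ex_succ (n : ℕ) (g : (Fin (n + 1) → Bool) → ℝ) :
    ex p (n + 1) g
      = ex p n (fun x => p * g (Fin.cons true x) + (1 - p) * g (Fin.cons false x)) := by
  unfold ex
  rw [← Equiv.sum_comp (Fin.consEquiv (fun _ => Bool)) (fun y => wt p (n+1) y * g y)]
  rw [Fintype.sum_prod_type]
  rw [Fintype.sum_bool]
  rw [← Finset.sum_add_distrib]
  refine Finset.sum_congr rfl fun x _ => ?_
  have hw : ∀ b : Bool, wt p (n + 1) (Fin.cons b x)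
      = (if b then p else 1 - p) * wt p n x := by
    intro b
    unfold wt
    rw [Fin.prod_univ_succ]
    simp [Fin.cons_succ]
  have hce : ∀ (b : Bool) (y : Fin n → Bool),
      (Fin.consEquiv fun _ : Fin (n + 1) => Bool) (b, y) = Fin.cons b y := fun _ _ => rfl
  rw [hce, hce, hw true, hw false]
  norm_num
  ring

lemma flip_cons_succ {n : ℕ} (b : Bool) (x : Fin n → Bool) (j : Fin n) :
    flipC j.succ (Fin.cons b x) = Fin.cons b (flipC j x) := by
  unfold flipC
  rw [Fin.cons_succ, Fin.cons_update]

lemma Dj_cons_succ {n : ℕ} (g : (Fin (n + 1) → Bool) → ℝ) (b : Bool) (x : Fin n → Bool)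
    (j : Fin n) :
    Dj j.succ g (Fin.cons b x) = Dj j (fun y => g (Fin.cons b y)) x := by
  unfold Dj
  rw [flip_cons_succ]

lemma Dj_cons_zero {n : ℕ} (g : (Fin (n + 1) → Bool) → ℝ) (b : Bool) (x : Fin n → Bool) :
    Dj 0 g (Fin.cons b x) = (g (Fin.cons b x) - g (Fin.cons (!b) x)) / 2 := by
  unfold Dj flipC
  rw [Fin.cons_zero, Fin.update_cons_zero]

/-- The Bobkov-type functional inequality with J(t) = c·t(1-t). -/
lemma bobkov (hp : p ∈ Set.Ioo (0:ℝ) 1) :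
    ∀ (n : ℕ) (g : (Fin n → Bool) → ℝ), (∀ x, 0 ≤ g x ∧ g x ≤ 1) →
      ccB p * ex p n g * (1 - ex p n g)
        ≤ ex p n (fun x =>
            Real.sqrt ((ccB p * g x * (1 - g x)) ^ 2 + ∑ j, Dj j g x ^ 2)) := by
  obtain ⟨h0, h1⟩ := hp
  have hcpos : 0 < ccB p := ccB_pos ⟨h0, h1⟩
  intro n
  induction n with
  | zero =>
    intro g hg
    have hx : ∀ (F : (Fin 0 → Bool) → ℝ), ex p 0 F = F default := by
      intro F
      unfold ex wt
      rw [Fintype.sum_unique]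
      norm_num
      exact congrArg F (funext fun a => a.elim0)
    rw [hx, hx]
    have hz : (∑ j : Fin 0, Dj j g default ^ 2) = 0 := by simp
    rw [hz, add_zero, Real.sqrt_sq]
    obtain ⟨hg0, hg1⟩ := hg default
    exact mul_nonneg (mul_nonneg hcpos.le hg0) (by linarith)
  | succ n ih =>
    intro g hg
    set c := ccB p with hc
    set q : ℝ := 1 - p with hqdef
    -- the conditional expectation over the first coordinate
    set gbar : (Fin n → Bool) → ℝ :=
      fun x => p * g (Fin.cons true x) + q * g (Fin.cons false x) with hgbar
    have hgbar : ∀ x, 0 ≤ gbar x ∧ gbar x ≤ 1 := by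
      intro x
      obtain ⟨hT0, hT1⟩ := hg (Fin.cons true x)
      obtain ⟨hF0, hF1⟩ := hg (Fin.cons false x)
      constructor
      · have : (0:ℝ) ≤ p * g (Fin.cons true x) := by positivity
        have h2 : (0:ℝ) ≤ q * g (Fin.cons false x) := by
          apply mul_nonneg _ hF0; simp only [hqdef]; linarith
        simp only [hgbar]; linarith
      · simp only [hgbar, hqdef]; nlinarith
    have hexg : ex p (n + 1) g = ex p n gbar := ex_succ n g
    have key : ∀ x : Fin n → Bool,
        Real.sqrt ((c * gbar x * (1 - gbar x)) ^ 2 + ∑ j, Dj j gbar x ^ 2)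
          ≤ p * Real.sqrt ((c * g (Fin.cons true x) * (1 - g (Fin.cons true x))) ^ 2
              + ∑ j, Dj j g (Fin.cons true x) ^ 2)
            + q * Real.sqrt ((c * g (Fin.cons false x) * (1 - g (Fin.cons false x))) ^ 2
              + ∑ j, Dj j g (Fin.cons false x) ^ 2) := by
      intro x
      set a : ℝ := g (Fin.cons true x) with hadef
      set b : ℝ := g (Fin.cons false x) with hbdef
      obtain ⟨ha0, ha1⟩ := hg (Fin.cons true x)
      obtain ⟨hb0, hb1⟩ := hg (Fin.cons false x)
      set JT : ℝ := c * a * (1 - a) with hJT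
      set JF : ℝ := c * b * (1 - b) with hJF
      set D0 : ℝ := (a - b) / 2 with hD0
      -- rewrite the Fin (n+1)-sums
      have hsumT : (∑ j, Dj j g (Fin.cons true x) ^ 2)
          = D0 ^ 2 + ∑ j : Fin n, Dj j (fun y => g (Fin.cons true y)) x ^ 2 := by
        rw [Fin.sum_univ_succ]
        congr 1
        · rw [Dj_cons_zero]
          simp only [Bool.not_true, hD0, hadef, hbdef]
          try ring
        · exact Finset.sum_congr rfl fun j _ => by rw [Dj_cons_succ]
      have hsumF : (∑ j, Dj j g (Fin.cons false x) ^ 2)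
          = D0 ^ 2 + ∑ j : Fin n, Dj j (fun y => g (Fin.cons false y)) x ^ 2 := by
        rw [Fin.sum_univ_succ]
        congr 1
        · rw [Dj_cons_zero]
          simp only [Bool.not_false, hD0, hadef, hbdef]
          try ring
        · exact Finset.sum_congr rfl fun j _ => by rw [Dj_cons_succ]
      have hDbar : ∀ j : Fin n, Dj j gbar x
          = p * Dj j (fun y => g (Fin.cons true y)) x
            + q * Dj j (fun y => g (Fin.cons false y)) x := by
        intro j
        simp only [Dj, hgbar]
        ring
      have hsumbar : (∑ j, Dj j gbar x ^ 2)
          = ∑ j : Fin n, (p * Dj j (fun y => g (Fin.cons true y)) x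
              + q * Dj j (fun y => g (Fin.cons false y)) x) ^ 2 :=
        Finset.sum_congr rfl fun j _ => by rw [hDbar]
      rw [hsumT, hsumF, hsumbar]
      have hq0 : (0:ℝ) ≤ q := by simp only [hqdef]; linarith
      -- first step : two-point inequality to replace J(gbar)
      have step1 : Real.sqrt ((c * gbar x * (1 - gbar x)) ^ 2
            + ∑ j : Fin n, (p * Dj j (fun y => g (Fin.cons true y)) x
              + q * Dj j (fun y => g (Fin.cons false y)) x) ^ 2)
          ≤ Real.sqrt ((p * JT + q * JF) ^ 2 + ((p * D0 + q * D0) ^ 2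
            + ∑ j : Fin n, (p * Dj j (fun y => g (Fin.cons true y)) x
              + q * Dj j (fun y => g (Fin.cons false y)) x) ^ 2)) := by
        apply Real.sqrt_le_sqrt
        have htp := twopoint ⟨h0, h1⟩ ha0 ha1 hb0 hb1
        have hJm0 : 0 ≤ c * gbar x * (1 - gbar x) := by
          obtain ⟨hg0, hg1⟩ := hgbar x
          have : 0 ≤ 1 - gbar x := by linarith
          positivity
        have hgbar_eq : gbar x = p * a + (1 - p) * b := by rfl
        rw [hgbar_eq] at hJm0 ⊢
        have h2 : (c * (p * a + (1 - p) * b) * (1 - (p * a + (1 - p) * b))) ^ 2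
            ≤ (p * (c * a * (1 - a)) + (1 - p) * (c * b * (1 - b))) ^ 2 + ((a - b) / 2) ^ 2 := by
          have hrhs0 : 0 ≤ (p * (c * a * (1 - a)) + (1 - p) * (c * b * (1 - b))) ^ 2
              + ((a - b) / 2) ^ 2 := by positivity
          calc (c * (p * a + (1 - p) * b) * (1 - (p * a + (1 - p) * b))) ^ 2
              ≤ Real.sqrt ((p * (c * a * (1 - a)) + (1 - p) * (c * b * (1 - b))) ^ 2
                  + ((a - b) / 2) ^ 2) ^ 2 := by
                apply pow_le_pow_left₀ hJm0 htp
            _ = _ := Real.sq_sqrt hrhs0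
        have hPD : (p * D0 + q * D0) ^ 2 = ((a - b) / 2) ^ 2 := by
          simp only [hD0, hqdef]; ring
        have hJJ : (p * JT + q * JF) ^ 2
            = (p * (c * a * (1 - a)) + (1 - p) * (c * b * (1 - b))) ^ 2 := by
          simp only [hJT, hJF, hqdef]
        rw [hPD, hJJ]
        linarith
      refine step1.trans ?_
      exact tri2 _ _ JT D0 JF D0 p q (le_of_lt h0) hq0
    calc c * ex p (n + 1) g * (1 - ex p (n + 1) g)
        = c * ex p n gbar * (1 - ex p n gbar) := by rw [hexg]
      _ ≤ ex p n (fun x => Real.sqrt ((c * gbar x * (1 - gbar x)) ^ 2 + ∑ j, Dj j gbar x ^ 2)) :=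
          ih gbar hgbar
      _ ≤ ex p n (fun x =>
            p * Real.sqrt ((c * g (Fin.cons true x) * (1 - g (Fin.cons true x))) ^ 2
              + ∑ j, Dj j g (Fin.cons true x) ^ 2)
            + q * Real.sqrt ((c * g (Fin.cons false x) * (1 - g (Fin.cons false x))) ^ 2
              + ∑ j, Dj j g (Fin.cons false x) ^ 2)) := ex_mono ⟨h0, h1⟩ key
      _ = ex p (n + 1) (fun y =>
            Real.sqrt ((c * g y * (1 - g y)) ^ 2 + ∑ j, Dj j g y ^ 2)) := by
          rw [ex_succ n (fun y => Real.sqrt ((c * g y * (1 - g y)) ^ 2 + ∑ j, Dj j g y ^ 2))]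

end aux

theorem stmt11 (p : ℝ) (hp : p ∈ Set.Ioo (0:ℝ) 1) (n : ℕ)
    (f : (Fin n → Bool) → ℝ) (hf : ∀ x, f x = 1 ∨ f x = -1) :
    ex p n (fun x => |f x - ex p n f|) = var p n f
    ∧ var p n f ≤ 2 * max p (1 - p) * Real.sqrt Real.pi * ex p n (gradNorm f) := by
  obtain ⟨h0, h1⟩ := hp
  set μ : ℝ := ex p n f with hμdef
  -- basic facts
  have hf1 : ∀ x, f x ^ 2 = 1 := by
    intro x; rcases hf x with h | h <;> rw [h] <;> norm_num
  have habs : ∀ x, |f x| = 1 := by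
    intro x; rcases hf x with h | h <;> rw [h] <;> norm_num
  have hex1 : ex p n (fun _ : Fin n → Bool => (1:ℝ)) = 1 := by
    have := ex_affine (p := p) n 0 1 f
    simpa using this
  have hμle : |μ| ≤ 1 := by
    have h := abs_ex_le ⟨h0, h1⟩ f
    have : ex p n (fun x => |f x|) = 1 := by
      rw [ex_congr (fun x => habs x)]; exact hex1
    rw [this] at h
    exact h
  have hμ1 : μ ≤ 1 := (abs_le.mp hμle).2
  have hμ2 : -1 ≤ μ := (abs_le.mp hμle).1
  have hvar : var p n f = 1 - μ ^ 2 := by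
    unfold var
    rw [ex_congr (fun x => hf1 x), hex1, hμdef]
  have hpart1 : ex p n (fun x => |f x - ex p n f|) = var p n f := by
    rw [hvar, ← hμdef]
    have hpt : ∀ x, |f x - μ| = -μ * f x + 1 := by
      intro x
      rcases hf x with h | h <;> rw [h]
      · rw [abs_of_nonneg (by linarith)]; ring
      · rw [abs_of_nonpos (by linarith)]; ring
    rw [ex_congr hpt, ex_affine, ← hμdef]
    ring
  refine ⟨hpart1, ?_⟩
  -- Part 2 : apply the Bobkov-type lemma to g = (f+1)/2
  have hcpos : 0 < ccB p := ccB_pos ⟨h0, h1⟩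
  set g : (Fin n → Bool) → ℝ := fun x => (f x + 1) / 2 with hgdef
  have hg01 : ∀ x, 0 ≤ g x ∧ g x ≤ 1 := by
    intro x; rcases hf x with h | h <;> simp only [hgdef, h] <;> norm_num
  have hb := bobkov ⟨h0, h1⟩ n g hg01
  have hexg : ex p n g = (μ + 1) / 2 := by
    have : ex p n (fun x => (1/2 : ℝ) * f x + 1/2) = (1/2) * ex p n f + 1/2 :=
      ex_affine n (1/2) (1/2) f
    have heq : ex p n g = ex p n (fun x => (1/2 : ℝ) * f x + 1/2) := by
      apply ex_congr; intro x; simp only [hgdef]; ring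
    rw [heq, this, ← hμdef]; ring
  have hJ0 : ∀ x, ccB p * g x * (1 - g x) = 0 := by
    intro x; rcases hf x with h | h <;> simp only [hgdef, h] <;> norm_num
  have hDg : ∀ (j : Fin n) x, Dj j g x = Dj j f x / 2 := by
    intro j x
    simp only [Dj, hgdef]
    ring
  have hint : ∀ x, Real.sqrt ((ccB p * g x * (1 - g x)) ^ 2 + ∑ j, Dj j g x ^ 2)
      = (1/2) * gradNorm f x := by
    intro x
    rw [hJ0 x]
    have hsum : (∑ j, Dj j g x ^ 2) = (1/2)^2 * ∑ j, Dj j f x ^ 2 := by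
      rw [Finset.mul_sum]
      exact Finset.sum_congr rfl fun j _ => by rw [hDg]; ring
    rw [hsum]
    have hz : (0:ℝ) ^ 2 + (1/2:ℝ) ^ 2 * (∑ j, Dj j f x ^ 2)
        = (1/2:ℝ) ^ 2 * ∑ j, Dj j f x ^ 2 := by ring
    rw [hz, Real.sqrt_mul (by norm_num), Real.sqrt_sq (by norm_num)]
    simp [gradNorm]
  rw [ex_congr hint] at hb
  have hgrad : ex p n (fun x => (1/2 : ℝ) * gradNorm f x)
      = (1/2) * ex p n (gradNorm f) := by
    have := ex_affine (p := p) n (1/2) 0 (gradNorm f)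
    simpa using this
  rw [hgrad, hexg] at hb
  have hlhs : ccB p * ((μ + 1) / 2) * (1 - (μ + 1) / 2) = ccB p * (1 - μ ^ 2) / 4 := by
    ring
  rw [hlhs] at hb
  -- conclude
  have hMpos : 0 < max p (1 - p) * Real.sqrt Real.pi := by
    have hM : 0 < max p (1 - p) := lt_max_of_lt_left h0
    have hπ : 0 < Real.sqrt Real.pi := Real.sqrt_pos.mpr Real.pi_pos
    exact mul_pos hM hπ
  have hkey : ccB p * var p n f ≤ 2 * ex p n (gradNorm f) := by
    rw [hvar]; linarith
  have hfin : var p n f = (max p (1 - p) * Real.sqrt Real.pi) * (ccB p * var p n f) := by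
    unfold ccB
    rw [← mul_assoc, mul_inv_cancel₀ (ne_of_gt hMpos), one_mul]
  rw [hfin]
  calc (max p (1 - p) * Real.sqrt Real.pi) * (ccB p * var p n f)
      ≤ (max p (1 - p) * Real.sqrt Real.pi) * (2 * ex p n (gradNorm f)) :=
        mul_le_mul_of_nonneg_left hkey hMpos.le
    _ = 2 * max p (1 - p) * Real.sqrt Real.pi * ex p n (gradNorm f) := by ring
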